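/- Let G be a Polish group that contains a dense perfect subgroup. Then every group homomorphism from G to ℤ is trivial; in particular Hom(G, ℤ) = 0. -/

import Mathlib

open Filter Topology


/-- Nested word `v n * (v (n+1) * ( ⋯ (v (n+l-1) * g^k)^k ⋯ )^k)^k`. -/
private def dudleyW {G : Type*} [Monoid G] (k : ℕ) (v : ℕ → G) : ℕ → ℕ → G → G
  | 0, _, g => g
  | (l+1), n, g => v n * (dudleyW k v l (n+1) g) ^ k

private lemma dudleyW_continuous {G : Type*} [Monoid G] [TopologicalSpace G]
    [ContinuousMul G] (k : ℕ) (v : ℕ → G) (l n : ℕ) :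
    Continuous (dudleyW k v l n) := by
  induction l generalizing n with
  | zero => exact continuous_id
  | succ l ih =>
      exact continuous_const.mul ((ih (n+1)).pow k)

private lemma dudleyW_snoc {G : Type*} [Monoid G] (k : ℕ) (v : ℕ → G) (l n : ℕ) (g : G) :
    dudleyW k v (l+1) n g = dudleyW k v l n (v (n+l) * g ^ k) := by
  induction l generalizing n with
  | zero => simp [dudleyW]
  | succ l ih =>
      rw [show dudleyW k v (l+1+1) n g = v n * (dudleyW k v (l+1) (n+1) g) ^ k from rfl,
        ih (n+1),
        show dudleyW k v (l+1) n (v (n+(l+1)) * g ^ k)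
          = v n * (dudleyW k v l (n+1) (v (n+(l+1)) * g ^ k)) ^ k from rfl,
        show n + (l+1) = n + 1 + l by omega]

private lemma dudleyW_congr {G : Type*} [Monoid G] (k : ℕ) (v w : ℕ → G) (l n : ℕ) (g : G)
    (h : ∀ j, n ≤ j → j < n + l → v j = w j) :
    dudleyW k v l n g = dudleyW k w l n g := by
  induction l generalizing n with
  | zero => rfl
  | succ l ih =>
      show v n * (dudleyW k v l (n+1) g) ^ k = w n * (dudleyW k w l (n+1) g) ^ k
      rw [h n le_rfl (by omega), ih (n+1) (fun j h1 h2 => h j (by omega) (by omega))]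

private lemma dudley_arith (c : ℤ) (hc : c ≠ 0) (m : ℕ → ℤ)
    (h : ∀ n, m n = c + ((2 * c.natAbs + 1 : ℕ) : ℤ) * m (n+1)) : False := by
  set k : ℤ := ((2 * c.natAbs + 1 : ℕ) : ℤ) with hk
  have hck : k = 2 * |c| + 1 := by
    rw [hk, Int.abs_eq_natAbs]; push_cast; ring
  have hc1 : 1 ≤ |c| := by
    rcases abs_cases c with ⟨h1, _⟩ | ⟨h1, _⟩ <;> omega
  -- there is n with |m n| ≤ |c|
  have step : ∃ n, |m n| ≤ |c| := by
    by_contra hcon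
    push_neg at hcon
    have dec : ∀ n, |m (n+1)| < |m n| := by
      intro n
      have h1 := h n
      have h2 := hcon n
      have h3 := hcon (n+1)
      rcases abs_cases (m n) with ⟨e1, _⟩ | ⟨e1, _⟩ <;>
        rcases abs_cases (m (n+1)) with ⟨e2, _⟩ | ⟨e2, _⟩ <;>
        rcases abs_cases c with ⟨e3, _⟩ | ⟨e3, _⟩ <;>
        nlinarith [hcon n, hcon (n+1)]
    have mono : ∀ n, |m n| + n ≤ |m 0| := by
      intro n
      induction n with
      | zero => simp
      | succ n ih => have := dec n; omega
    have h6 := mono ((m 0).natAbs + 1)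
    have h7 : ((m 0).natAbs : ℤ) = |m 0| := (Int.abs_eq_natAbs _).symm
    have h8 := abs_nonneg (m ((m 0).natAbs + 1))
    omega
  obtain ⟨n, hn⟩ := step
  have key : ∀ j, |m j| ≤ |c| → m (j+1) = 0 ∧ m j = c := by
    intro j hj
    have h1 := h j
    have h2 : k * |m (j+1)| = |m j - c| := by
      conv_lhs => rw [show k = |k| from (abs_of_nonneg (by omega)).symm]
      rw [← abs_mul]
      congr 1; omega
    have h3 : |m j - c| ≤ 2 * |c| := by
      calc |m j - c| ≤ |m j| + |c| := abs_sub _ _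
        _ ≤ 2 * |c| := by omega
    have h4 : |m (j+1)| = 0 := by nlinarith [abs_nonneg (m (j+1))]
    have h5 : m (j+1) = 0 := abs_eq_zero.mp h4
    refine ⟨h5, ?_⟩
    rw [h5, mul_zero, add_zero] at h1
    exact h1
  obtain ⟨h1, h2⟩ := key n hn
  obtain ⟨h3, h4⟩ := key (n+1) (by rw [h1]; simpa using hc1)
  omega

private lemma dudley_metric {G : Type*} [Group G] [MetricSpace G] [IsTopologicalGroup G]
    [CompleteSpace G] (φ : G → ℤ)
    (hφ : ∀ a b : G, φ (a * b) = φ a + φ b)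
    (hpow : ∀ (x : G) (n : ℕ), φ (x ^ n) = n * φ x)
    (c : ℤ) (hc : c ≠ 0)
    (key : ∀ U ∈ 𝓝 (1:G), ∃ x ∈ U, φ x = c) : False := by
  classical
  set k : ℕ := 2 * c.natAbs + 1 with hk
  set vOf : List G → ℕ → G := fun l j => l.getD j 1 with hvOf
  set Uof : List G → Set G := fun l =>
    ⋂ n ∈ Finset.range (l.length + 1),
      (fun g => dudleyW k (vOf l) (l.length - n) n g) ⁻¹'
        Metric.ball (dudleyW k (vOf l) (l.length - n) n 1) ((1/2 : ℝ)^l.length) with hUof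
  have hU : ∀ l : List G, Uof l ∈ 𝓝 (1:G) := by
    intro l
    rw [hUof]
    refine (Filter.biInter_finset_mem _).2 fun n _ => ?_
    exact (dudleyW_continuous k (vOf l) _ n).continuousAt.preimage_mem_nhds
      (Metric.ball_mem_nhds _ (by positivity))
  have hpick : ∀ l : List G, ∃ z ∈ Uof l, φ z = c := fun l => key _ (hU l)
  set pick : List G → G := fun l => (hpick l).choose with hpickdef
  have pick_mem : ∀ l, pick l ∈ Uof l := fun l => (hpick l).choose_spec.1
  have pick_phi : ∀ l, φ (pick l) = c := fun l => (hpick l).choose_spec.2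
  set L : ℕ → List G := fun m => Nat.rec [] (fun _ l => l ++ [pick l]) m with hL
  set x : ℕ → G := fun m => pick (L m) with hx
  have hLs : ∀ m, L (m+1) = L m ++ [x m] := fun _ => rfl
  have hlen : ∀ m, (L m).length = m := by
    intro m
    induction m with
    | zero => rfl
    | succ m ih => rw [hLs]; simp [ih]
  have hget : ∀ m j, j < m → (L m).getD j 1 = x j := by
    intro m
    induction m with
    | zero => omega
    | succ m ih =>
        intro j hj
        rw [hLs]
        rcases lt_or_eq_of_le (Nat.lt_succ_iff.mp hj) with h | h
        · rw [List.getD_append _ _ _ _ (by rw [hlen]; exact h)]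
          exact ih j h
        · subst h
          rw [List.getD_append_right _ _ _ _ (by rw [hlen])]
          simp [hlen]
  set q : ℕ → ℕ → G := fun n m => dudleyW k x (m - n) n 1 with hqdef
  have hstep : ∀ n m, dist (q n m) (q n (m+1)) ≤ (1/2 : ℝ)^m := by
    intro n m
    rcases lt_or_ge m n with h | h
    · have e1 : m - n = 0 := by omega
      have e2 : m + 1 - n = 0 := by omega
      simp [hqdef, e1, e2, dudleyW]
    · have e1 : q n (m+1) = dudleyW k x (m-n) n (x m) := by
        rw [hqdef]
        simp only
        rw [show m + 1 - n = (m - n) + 1 by omega, dudleyW_snoc]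
        rw [one_pow, mul_one, show n + (m - n) = m by omega]
      have hmem := pick_mem (L m)
      rw [hUof] at hmem
      simp only [Set.mem_iInter] at hmem
      have h2 := hmem n (by simp [hlen]; omega)
      rw [Set.mem_preimage, Metric.mem_ball, hlen] at h2
      have hcongr : ∀ g : G, dudleyW k (vOf (L m)) (m - n) n g = dudleyW k x (m-n) n g := by
        intro g
        refine dudleyW_congr _ _ _ _ _ _ fun j h1 h2 => ?_
        exact hget m j (by omega)
      rw [hcongr, hcongr] at h2
      rw [e1, dist_comm]
      exact le_of_lt (by exact h2)
  have hcau : ∀ n, CauchySeq (fun m => q n m) := by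
    intro n
    refine cauchySeq_of_le_geometric (1/2) 1 (by norm_num) fun m => ?_
    simpa using hstep n m
  have hy : ∀ n, ∃ y : G, Tendsto (fun m => q n m) atTop (𝓝 y) :=
    fun n => cauchySeq_tendsto_of_complete (hcau n)
  choose y hylim using hy
  have hrec : ∀ n, y n = x n * (y (n+1)) ^ k := by
    intro n
    have h1 : ∀ᶠ m in atTop, x n * (q (n+1) m) ^ k = q n m := by
      filter_upwards [eventually_ge_atTop (n+1)] with m hm
      rw [hqdef]
      simp only
      rw [show m - n = (m - (n+1)) + 1 by omega]
      rfl
    have h2 : Tendsto (fun m => x n * (q (n+1) m) ^ k) atTop (𝓝 (x n * (y (n+1)) ^ k)) :=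
      ((hylim (n+1)).pow k).const_mul (x n)
    exact tendsto_nhds_unique (hylim n) (h2.congr' h1) |>.symm ▸ rfl
  have hm : ∀ n, φ (y n) = c + (k : ℤ) * φ (y (n+1)) := by
    intro n
    rw [hrec n, hφ, hpow, hx]
    simp only
    rw [pick_phi]
  exact dudley_arith c hc (fun n => φ (y n)) fun n => hm n

/-- If a Polish group `G` contains a dense perfect subgroup, then every group
homomorphism `G → ℤ` is trivial. -/
theorem hom_trivial_of_dense_perfect {G : Type*} [Group G] [TopologicalSpace G]
    [IsTopologicalGroup G] [PolishSpace G] (P : Subgroup G)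
    (hdense : Dense (P : Set G)) (hperf : commutator ↥P = ⊤)
    (φ : G → ℤ) (hφ : ∀ a b : G, φ (a * b) = φ a + φ b) :
    ∀ g : G, φ g = 0 := by
  have φ1 : φ 1 = 0 := by have := hφ 1 1; simp at this; omega
  have hpow : ∀ (x : G) (n : ℕ), φ (x ^ n) = n * φ x := by
    intro x n
    induction n with
    | zero => simpa using φ1
    | succ n ih => rw [pow_succ, hφ, ih]; push_cast; ring
  have φinv : ∀ x : G, φ x⁻¹ = - φ x := by
    intro x
    have := hφ x x⁻¹
    simp [φ1] at this
    omega
  -- ψ as a monoid hom to `Multiplicative ℤ`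
  set ψ : G →* Multiplicative ℤ :=
    { toFun := fun g => Multiplicative.ofAdd (φ g)
      map_one' := by simp [φ1]
      map_mul' := fun a b => by simp [hφ] } with hψ
  have φP : ∀ p : G, p ∈ P → φ p = 0 := by
    intro p hp
    have h1 : commutator ↥P ≤ (ψ.comp P.subtype).ker :=
      Abelianization.commutator_subset_ker _
    rw [hperf] at h1
    have h2 : (⟨p, hp⟩ : ↥P) ∈ (ψ.comp P.subtype).ker := h1 (Subgroup.mem_top _)
    rw [MonoidHom.mem_ker] at h2
    have h3 : Multiplicative.ofAdd (φ p) = (1 : Multiplicative ℤ) := h2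
    simpa using h3
  by_contra hcon
  push_neg at hcon
  obtain ⟨g, hg⟩ := hcon
  have key : ∀ U ∈ 𝓝 (1:G), ∃ x ∈ U, φ x = φ g := by
    intro U hU
    have hcont : Continuous fun p : G => p⁻¹ * g := (continuous_inv).mul continuous_const
    have hUg : (fun p : G => p⁻¹ * g) ⁻¹' U ∈ 𝓝 g := by
      apply hcont.continuousAt.preimage_mem_nhds
      simpa using hU
    obtain ⟨V, hVU, hVopen, hgV⟩ := mem_nhds_iff.mp hUg
    obtain ⟨p, hpP, hpV⟩ := hdense.exists_mem_open hVopen ⟨g, hgV⟩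
    refine ⟨p⁻¹ * g, hVU hpV, ?_⟩
    rw [hφ, φinv, φP p hpP]
    ring
  letI := TopologicalSpace.upgradeIsCompletelyMetrizable G
  exact absurd (dudley_metric φ hφ hpow (φ g) hg key) id
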